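/- Let n = n₁ + n₂ with n₁, n₂ ≥ 2 and let ξ_{n₁n₂} be the 2-order Gray code map. Then Σ_{j=1}^{2^{n₂}−1} θ(n, ξ_{n₁n₂}^{-1}(N_{2^{n₁}} × N_j)) = 2^{n−n₂}(2^{2n₂−1} − 2^{n₂−1}), where N_m = {1,...,m}. -/
import Mathlib


open Finset

/-- Number of coordinates in which two 0-1 vectors differ. -/
def diffCount {n : ℕ} (u v : Fin n → Bool) : ℕ :=
  (Finset.univ.filter fun i => u i ≠ v i).card

/-- Adjacency in the hypercube `Q_n`: differ in exactly one coordinate. -/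
def cubeAdj {n : ℕ} (u v : Fin n → Bool) : Prop := diffCount u v = 1

instance {n : ℕ} (u v : Fin n → Bool) : Decidable (cubeAdj u v) :=
  inferInstanceAs (Decidable (diffCount u v = 1))

/-- `theta n S`: number of edges of `Q_n` with exactly one endpoint in `S`. -/
def theta (n : ℕ) (S : Finset (Fin n → Bool)) : ℕ :=
  ((Finset.univ ×ˢ Finset.univ).filter fun p : (Fin n → Bool) × (Fin n → Bool) =>
    p.1 ∈ S ∧ p.2 ∉ S ∧ cubeAdj p.1 p.2).card

/-- The reflected Gray code map `ξ_n : {0,1}^n → {1,...,2^n}`. -/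
def gray : (n : ℕ) → (Fin n → Bool) → ℕ
  | 0, _ => 1
  | n + 1, v =>
    if v 0 = false then gray n (fun i => v i.succ)
    else 2 ^ (n + 1) + 1 - gray n (fun i => v i.succ)

/-- Wirelength of an embedding `f` of `Q_n` into a host with distance `d`. -/
def wirelength {n : ℕ} {α : Type*} (d : α → α → ℕ) (f : (Fin n → Bool) → α) : ℕ :=
  (∑ u : Fin n → Bool, ∑ v : Fin n → Bool, if cubeAdj u v then d (f u) (f v) else 0) / 2

/-- Cyclic distance on the cycle with `m` vertices labeled `1,...,m`. -/
def cycDist (m a b : ℕ) : ℕ := min (Nat.dist a b) (m - Nat.dist a b)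

/-- The 2-order Gray code map. -/
def gray2 (n₁ n₂ : ℕ) (v : Fin (n₁ + n₂) → Bool) : ℕ × ℕ :=
  (gray n₁ fun i => v (Fin.castAdd n₂ i), gray n₂ fun i => v (Fin.natAdd n₁ i))

set_option linter.unusedVariables false

theorem gray_bounds : ∀ (n : ℕ) (v : Fin n → Bool), 1 ≤ gray n v ∧ gray n v ≤ 2 ^ n := by
  intro n
  induction n with
  | zero => intro v; simp [gray]
  | succ n ih =>
    intro v
    obtain ⟨h1, h2⟩ := ih (fun i => v i.succ)
    have hp : (2:ℕ)^(n+1) = 2 * 2^n := by ring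
    cases hv : v 0 <;> simp [gray, hv] <;> omega

theorem diffCount_eq_sum {n : ℕ} (u v : Fin n → Bool) :
    diffCount u v = ∑ i : Fin n, if u i ≠ v i then 1 else 0 := by
  simp [diffCount, Finset.card_filter]

theorem diffCount_eq_zero {n : ℕ} {u v : Fin n → Bool} : diffCount u v = 0 ↔ u = v := by
  constructor
  · intro h
    funext i
    by_contra hne
    have hm : i ∈ Finset.univ.filter fun i => u i ≠ v i := by simp [hne]
    have := Finset.card_pos.mpr ⟨i, hm⟩
    unfold diffCount at h
    omega
  · intro h; subst h; simp [diffCount]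

theorem diffCount_comm {n : ℕ} (u v : Fin n → Bool) : diffCount u v = diffCount v u := by
  simp [diffCount_eq_sum, ne_comm]

theorem cubeAdj_comm {n : ℕ} (u v : Fin n → Bool) : cubeAdj u v ↔ cubeAdj v u := by
  unfold cubeAdj; rw [diffCount_comm]

section
variable {n : ℕ}

theorem sum_cons_split (f : (Fin (n+1) → Bool) → ℕ) :
    ∑ v : Fin (n+1) → Bool, f v = ∑ b : Bool, ∑ t : Fin n → Bool, f (Fin.cons b t) := by
  rw [← Equiv.sum_comp (Fin.consEquiv fun _ => Bool) f, Fintype.sum_prod_type]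
  rfl

theorem gray_cons (b : Bool) (t : Fin n → Bool) :
    gray (n+1) (Fin.cons b t) = if b = false then gray n t else 2 ^ (n+1) + 1 - gray n t := by
  simp [gray, Fin.cons_zero, Fin.cons_succ]

theorem gray_sum : ∀ n : ℕ, 2 * ∑ v : Fin n → Bool, gray n v = 2 ^ n * (2 ^ n + 1) := by
  intro n
  induction n with
  | zero => simp [gray]
  | succ n _ =>
    rw [sum_cons_split, Fintype.sum_bool]
    have hb : ∀ t : Fin n → Bool, gray n t ≤ 2 ^ n := fun t => (gray_bounds n t).2
    have h1 : ∀ t : Fin n → Bool, gray (n+1) (Fin.cons false t) = gray n t := by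
      intro t; simp [gray_cons]
    have h2 : ∀ t : Fin n → Bool, gray (n+1) (Fin.cons true t) = 2^(n+1)+1 - gray n t := by
      intro t; simp [gray_cons]
    simp only [h1, h2]
    have key : (∑ t : Fin n → Bool, (2^(n+1)+1 - gray n t)) + ∑ t : Fin n → Bool, gray n t
        = 2^n * (2^(n+1)+1) := by
      rw [← Finset.sum_add_distrib]
      have he : ∀ t ∈ (univ : Finset (Fin n → Bool)),
          (2^(n+1)+1 - gray n t) + gray n t = 2^(n+1)+1 := by
        intro t _
        have := hb t
        have hp : (2:ℕ)^(n+1) = 2*2^n := by ring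
        omega
      rw [Finset.sum_congr rfl he, Finset.sum_const, card_univ]
      simp [mul_comm]
    calc 2 * ((∑ t : Fin n → Bool, (2^(n+1)+1 - gray n t)) + ∑ t : Fin n → Bool, gray n t)
        = 2 * (2^n * (2^(n+1)+1)) := by rw [key]
      _ = 2^(n+1) * (2^(n+1)+1) := by ring
end

section
variable {n : ℕ}

theorem diffCount_cons (b b' : Bool) (t t' : Fin n → Bool) :
    diffCount (Fin.cons b t) (Fin.cons b' t') = (if b ≠ b' then 1 else 0) + diffCount t t' := by
  rw [diffCount_eq_sum, Fin.sum_univ_succ]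
  simp [diffCount_eq_sum, Fin.cons_succ, Fin.cons_zero]

theorem cubeAdj_cons (b b' : Bool) (t t' : Fin n → Bool) :
    cubeAdj (Fin.cons b t) (Fin.cons b' t') ↔ (b = b' ∧ cubeAdj t t') ∨ (b ≠ b' ∧ t = t') := by
  unfold cubeAdj
  rw [diffCount_cons]
  by_cases h : b = b'
  · simp [h]
  · rw [if_pos h]
    constructor
    · intro hd
      exact Or.inr ⟨h, diffCount_eq_zero.mp (by omega)⟩
    · rintro (⟨hbb, _⟩ | ⟨_, ht⟩)
      · exact absurd hbb h
      · rw [diffCount_eq_zero.mpr ht]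
  
theorem dist_complement {M a b : ℕ} (ha : a ≤ M) (hb : b ≤ M) :
    Nat.dist (M + 1 - a) (M + 1 - b) = Nat.dist a b := by
  simp [Nat.dist]; omega

def W (n : ℕ) : ℕ :=
  ∑ u : Fin n → Bool, ∑ v : Fin n → Bool,
    if cubeAdj u v then Nat.dist (gray n u) (gray n v) else 0

theorem W_succ (n : ℕ) : W (n+1) = 2 * W n + 2 ^ (2*n+1) := by
  have hb : ∀ t : Fin n → Bool, 1 ≤ gray n t ∧ gray n t ≤ 2 ^ n := fun t => gray_bounds n t
  have hp1 : (2:ℕ)^(n+1) = 2*2^n := by ring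
  have hp2 : (2:ℕ)^(2*n) = 2^n*2^n := by rw [two_mul, pow_add]
  have hS := gray_sum n
  have hcard : (univ : Finset (Fin n → Bool)).card = 2 ^ n := by
    simp [Finset.card_univ]
  have mixed : ∑ t : Fin n → Bool, Nat.dist (gray n t) (2^(n+1)+1 - gray n t) = 2^(2*n) := by
    have e : ∀ t ∈ (univ : Finset (Fin n → Bool)),
        Nat.dist (gray n t) (2^(n+1)+1 - gray n t) = (2^(n+1)+1) - 2*gray n t := by
      intro t _; have := hb t; simp [Nat.dist]; omega
    rw [Finset.sum_congr rfl e]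
    have e2 : ∀ t ∈ (univ : Finset (Fin n → Bool)),
        ((2^(n+1)+1) - 2*gray n t) + 2*gray n t = 2^(n+1)+1 := by
      intro t _; have := hb t; omega
    have e3 : (∑ t : Fin n → Bool, ((2^(n+1)+1) - 2*gray n t)) + 2 * ∑ t : Fin n → Bool, gray n t
        = 2^n * (2^(n+1)+1) := by
      rw [Finset.mul_sum, ← Finset.sum_add_distrib, Finset.sum_congr rfl e2,
        Finset.sum_const, hcard, smul_eq_mul, mul_comm]
    have id1 : 2^n * (2^(n+1)+1) = 2^n * (2^n + 1) + 2^(2*n) := by rw [hp1, hp2]; ring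
    omega
  have key : W (n+1) = ∑ b : Bool, ∑ b' : Bool, ∑ t : Fin n → Bool, ∑ t' : Fin n → Bool,
      (if cubeAdj (Fin.cons b t) (Fin.cons b' t')
        then Nat.dist (gray (n+1) (Fin.cons b t)) (gray (n+1) (Fin.cons b' t')) else 0) := by
    rw [W, sum_cons_split]
    refine Finset.sum_congr rfl fun b _ => ?_
    rw [Finset.sum_congr rfl fun t (_ : t ∈ (univ : Finset (Fin n → Bool))) => sum_cons_split
        (fun v => if cubeAdj (Fin.cons b t) v
          then Nat.dist (gray (n+1) (Fin.cons b t)) (gray (n+1) v) else 0)]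
    exact Finset.sum_comm
  have Hff : ∑ t : Fin n → Bool, ∑ t' : Fin n → Bool,
      (if cubeAdj (Fin.cons false t) (Fin.cons false t')
        then Nat.dist (gray (n+1) (Fin.cons false t)) (gray (n+1) (Fin.cons false t')) else 0)
      = W n := by
    rw [W]
    apply Finset.sum_congr rfl; intro t _
    apply Finset.sum_congr rfl; intro t' _
    simp [cubeAdj_cons, gray_cons]
  have Htt : ∑ t : Fin n → Bool, ∑ t' : Fin n → Bool,
      (if cubeAdj (Fin.cons true t) (Fin.cons true t')
        then Nat.dist (gray (n+1) (Fin.cons true t)) (gray (n+1) (Fin.cons true t')) else 0)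
      = W n := by
    rw [W]
    apply Finset.sum_congr rfl; intro t _
    apply Finset.sum_congr rfl; intro t' _
    have hg : ∀ s : Fin n → Bool, gray (n+1) (Fin.cons true s) = 2^(n+1)+1 - gray n s := by
      intro s; rw [gray_cons]; simp
    by_cases hadj : cubeAdj t t'
    · rw [if_pos (by simp [cubeAdj_cons, hadj]), if_pos hadj, hg, hg]
      exact dist_complement (le_trans (hb t).2 (by omega)) (le_trans (hb t').2 (by omega))
    · rw [if_neg (by simp [cubeAdj_cons, hadj]), if_neg hadj]
  have Hft : ∑ t : Fin n → Bool, ∑ t' : Fin n → Bool,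
      (if cubeAdj (Fin.cons false t) (Fin.cons true t')
        then Nat.dist (gray (n+1) (Fin.cons false t)) (gray (n+1) (Fin.cons true t')) else 0)
      = 2^(2*n) := by
    rw [← mixed]
    apply Finset.sum_congr rfl; intro t _
    have : ∀ t' : Fin n → Bool,
        (if cubeAdj (Fin.cons false t) (Fin.cons true t')
          then Nat.dist (gray (n+1) (Fin.cons false t)) (gray (n+1) (Fin.cons true t')) else 0)
        = (if t = t' then Nat.dist (gray n t) (2^(n+1)+1 - gray n t') else 0) := by
      intro t'
      simp [cubeAdj_cons, gray_cons]
    rw [Finset.sum_congr rfl (fun t' _ => this t')]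
    rw [Finset.sum_ite_eq]
    simp
  have Htf : ∑ t : Fin n → Bool, ∑ t' : Fin n → Bool,
      (if cubeAdj (Fin.cons true t) (Fin.cons false t')
        then Nat.dist (gray (n+1) (Fin.cons true t)) (gray (n+1) (Fin.cons false t')) else 0)
      = 2^(2*n) := by
    rw [← mixed]
    have : ∀ t t' : Fin n → Bool,
        (if cubeAdj (Fin.cons true t) (Fin.cons false t')
          then Nat.dist (gray (n+1) (Fin.cons true t)) (gray (n+1) (Fin.cons false t')) else 0)
        = (if t = t' then Nat.dist (2^(n+1)+1 - gray n t) (gray n t') else 0) := by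
      intro t t'
      simp [cubeAdj_cons, gray_cons]
    apply Finset.sum_congr rfl; intro t _
    rw [Finset.sum_congr rfl (fun t' _ => this t t'), Finset.sum_ite_eq]
    simp [Nat.dist_comm]
  rw [key, Fintype.sum_bool, Fintype.sum_bool, Fintype.sum_bool, Htt, Htf, Hft, Hff]
  have : (2:ℕ)^(2*n+1) = 2*2^(2*n) := by ring
  omega

theorem W_eq : ∀ n : ℕ, W n = 2^(2*n) - 2^n := by
  intro n
  induction n with
  | zero => decide
  | succ n ih =>
    rw [W_succ, ih]
    have h1 : (2:ℕ)^(2*(n+1)) = 4 * 2^(2*n) := by rw [mul_add, pow_add]; ring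
    have h2 : (2:ℕ)^(2*n+1) = 2 * 2^(2*n) := by rw [pow_succ]; ring
    have h3 : (2:ℕ)^(n+1) = 2 * 2^n := by ring
    have h4 : (2:ℕ)^n ≤ 2^(2*n) := Nat.pow_le_pow_right (by norm_num) (by omega)
    omega
end

section
variable {n₁ n₂ : ℕ}

theorem diffCount_append (u v : Fin (n₁+n₂) → Bool) :
    diffCount u v
      = diffCount (fun i => u (Fin.castAdd n₂ i)) (fun i => v (Fin.castAdd n₂ i))
        + diffCount (fun i => u (Fin.natAdd n₁ i)) (fun i => v (Fin.natAdd n₁ i)) := by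
  rw [diffCount_eq_sum, diffCount_eq_sum, diffCount_eq_sum, Fin.sum_univ_add]

theorem cubeAdj_split (u v : Fin (n₁+n₂) → Bool) :
    cubeAdj u v ↔
      ((fun i => u (Fin.castAdd n₂ i)) = (fun i => v (Fin.castAdd n₂ i))
          ∧ cubeAdj (fun i => u (Fin.natAdd n₁ i)) (fun i => v (Fin.natAdd n₁ i)))
      ∨ (cubeAdj (fun i => u (Fin.castAdd n₂ i)) (fun i => v (Fin.castAdd n₂ i))
          ∧ (fun i => u (Fin.natAdd n₁ i)) = (fun i => v (Fin.natAdd n₁ i))) := by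
  unfold cubeAdj
  rw [diffCount_append, ← diffCount_eq_zero, ← diffCount_eq_zero]
  omega

def appEquiv (n₁ n₂ : ℕ) : ((Fin n₁ → Bool) × (Fin n₂ → Bool)) ≃ (Fin (n₁+n₂) → Bool) where
  toFun p := Fin.append p.1 p.2
  invFun v := (fun i => v (Fin.castAdd n₂ i), fun i => v (Fin.natAdd n₁ i))
  left_inv p := by
    obtain ⟨a, b⟩ := p
    have h1 : (fun i => Fin.append a b (Fin.castAdd n₂ i)) = a := by
      funext i; exact Fin.append_left a b i
    have h2 : (fun i => Fin.append a b (Fin.natAdd n₁ i)) = b := by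
      funext i; exact Fin.append_right a b i
    simp only [h1, h2]
  right_inv v := by
    funext i
    refine Fin.addCases (fun j => ?_) (fun j => ?_) i
    · exact Fin.append_left _ _ j
    · exact Fin.append_right _ _ j

theorem sum_append_split (f : (Fin (n₁+n₂) → Bool) → ℕ) :
    ∑ v : Fin (n₁+n₂) → Bool, f v
      = ∑ a : Fin n₁ → Bool, ∑ b : Fin n₂ → Bool, f (Fin.append a b) := by
  rw [← Equiv.sum_comp (appEquiv n₁ n₂) f, Fintype.sum_prod_type]
  rfl

theorem head_append (a : Fin n₁ → Bool) (b : Fin n₂ → Bool) :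
    (fun i => Fin.append a b (Fin.castAdd n₂ i)) = a := by
  funext i; exact Fin.append_left a b i

theorem tail_append (a : Fin n₁ → Bool) (b : Fin n₂ → Bool) :
    (fun i => Fin.append a b (Fin.natAdd n₁ i)) = b := by
  funext i; exact Fin.append_right a b i

def D (n : ℕ) : ℕ :=
  ∑ u : Fin n → Bool, ∑ v : Fin n → Bool, if cubeAdj u v then gray n v - gray n u else 0

theorem two_D (n : ℕ) : 2 * D n = W n := by
  rw [two_mul, D, W]
  nth_rewrite 2 [Finset.sum_comm]
  rw [← Finset.sum_add_distrib]
  apply Finset.sum_congr rfl; intro u _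
  rw [← Finset.sum_add_distrib]
  apply Finset.sum_congr rfl; intro v _
  by_cases h : cubeAdj u v
  · rw [if_pos h, if_pos ((cubeAdj_comm u v).mp h), if_pos h]
    simp [Nat.dist]
    omega
  · rw [if_neg h, if_neg (fun h' => h ((cubeAdj_comm v u).mp h')), if_neg h]

theorem D_eq (n : ℕ) (hn : 1 ≤ n) : D n = 2^(2*n-1) - 2^(n-1) := by
  have h := two_D n
  rw [W_eq] at h
  have e1 : 2*n = (2*n-1) + 1 := by omega
  have e2 : n = (n-1) + 1 := by omega
  have h1 : (2:ℕ)^(2*n) = 2 * 2^(2*n-1) := by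
    conv_lhs => rw [e1]
    rw [pow_succ]; ring
  have h2 : (2:ℕ)^n = 2 * 2^(n-1) := by nth_rewrite 1 [e2]; rw [pow_succ]; ring
  have h3 : (2:ℕ)^(n-1) ≤ 2^(2*n-1) := Nat.pow_le_pow_right (by norm_num) (by omega)
  omega
end

theorem theta_as_sum (n : ℕ) (S : Finset (Fin n → Bool)) :
    theta n S = ∑ u : Fin n → Bool, ∑ v : Fin n → Bool,
      if u ∈ S ∧ v ∉ S ∧ cubeAdj u v then 1 else 0 := by
  rw [theta, Finset.card_filter, Finset.sum_product]

theorem count_lemma (N a b : ℕ) (ha : 1 ≤ a) (hb : b ≤ N) (c : Prop) [Decidable c] :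
    ∑ j ∈ Finset.Icc 1 (N - 1), (if a ≤ j ∧ ¬ b ≤ j ∧ c then 1 else 0)
      = if c then b - a else 0 := by
  by_cases hc : c
  · rw [if_pos hc, ← Finset.card_filter]
    have hfe : (Finset.Icc 1 (N-1)).filter (fun j => a ≤ j ∧ ¬ b ≤ j ∧ c)
        = Finset.Icc a (b - 1) := by
      ext j
      simp only [Finset.mem_filter, Finset.mem_Icc, hc, and_true]
      omega
    rw [hfe, Nat.card_Icc]
    omega
  · rw [if_neg hc]
    exact Finset.sum_eq_zero fun j _ => by rw [if_neg (fun h => hc h.2.2)]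


theorem stmt11 (n₁ n₂ : ℕ) (h₁ : 2 ≤ n₁) (h₂ : 2 ≤ n₂) :
    ∑ j ∈ Finset.Icc 1 (2 ^ n₂ - 1),
        theta (n₁ + n₂) (Finset.univ.filter fun v : Fin (n₁ + n₂) → Bool =>
          gray2 n₁ n₂ v ∈ (Finset.Icc 1 (2 ^ n₁)) ×ˢ Finset.Icc 1 j) =
      2 ^ (n₁ + n₂ - n₂) * (2 ^ (2 * n₂ - 1) - 2 ^ (n₂ - 1)) := by
  have hmem : ∀ (j : ℕ) (v : Fin (n₁+n₂) → Bool),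
      (v ∈ Finset.univ.filter fun v : Fin (n₁ + n₂) → Bool =>
          gray2 n₁ n₂ v ∈ (Finset.Icc 1 (2 ^ n₁)) ×ˢ Finset.Icc 1 j)
        ↔ gray n₂ (fun i => v (Fin.natAdd n₁ i)) ≤ j := by
    intro j v
    have b1 := gray_bounds n₁ (fun i => v (Fin.castAdd n₂ i))
    have b2 := gray_bounds n₂ (fun i => v (Fin.natAdd n₁ i))
    simp only [Finset.mem_filter, Finset.mem_univ, true_and, gray2,
      Finset.mem_product, Finset.mem_Icc]
    omega
  calc ∑ j ∈ Finset.Icc 1 (2 ^ n₂ - 1),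
        theta (n₁ + n₂) (Finset.univ.filter fun v : Fin (n₁ + n₂) → Bool =>
          gray2 n₁ n₂ v ∈ (Finset.Icc 1 (2 ^ n₁)) ×ˢ Finset.Icc 1 j)
      = ∑ j ∈ Finset.Icc 1 (2 ^ n₂ - 1), ∑ u : Fin (n₁+n₂) → Bool, ∑ v : Fin (n₁+n₂) → Bool,
          (if gray n₂ (fun i => u (Fin.natAdd n₁ i)) ≤ j
              ∧ ¬ gray n₂ (fun i => v (Fin.natAdd n₁ i)) ≤ j
              ∧ cubeAdj u v then 1 else 0) := by
        refine Finset.sum_congr rfl fun j _ => ?_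
        rw [theta_as_sum]
        refine Finset.sum_congr rfl fun u _ => Finset.sum_congr rfl fun v _ => ?_
        exact if_congr (and_congr (hmem j u)
          (and_congr (not_congr (hmem j v)) Iff.rfl)) rfl rfl
    _ = ∑ u : Fin (n₁+n₂) → Bool, ∑ v : Fin (n₁+n₂) → Bool,
          ∑ j ∈ Finset.Icc 1 (2 ^ n₂ - 1),
          (if gray n₂ (fun i => u (Fin.natAdd n₁ i)) ≤ j
              ∧ ¬ gray n₂ (fun i => v (Fin.natAdd n₁ i)) ≤ j
              ∧ cubeAdj u v then 1 else 0) := by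
        rw [Finset.sum_comm]
        exact Finset.sum_congr rfl fun u _ => Finset.sum_comm
    _ = ∑ u : Fin (n₁+n₂) → Bool, ∑ v : Fin (n₁+n₂) → Bool,
          (if cubeAdj u v
            then gray n₂ (fun i => v (Fin.natAdd n₁ i))
              - gray n₂ (fun i => u (Fin.natAdd n₁ i)) else 0) := by
        refine Finset.sum_congr rfl fun u _ => Finset.sum_congr rfl fun v _ => ?_
        exact count_lemma (2^n₂) _ _
          (gray_bounds n₂ (fun i => u (Fin.natAdd n₁ i))).1
          (gray_bounds n₂ (fun i => v (Fin.natAdd n₁ i))).2 _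
    _ = ∑ u : Fin (n₁+n₂) → Bool, ∑ v : Fin (n₁+n₂) → Bool,
          (if ((fun i => u (Fin.castAdd n₂ i)) = (fun i => v (Fin.castAdd n₂ i))
              ∧ cubeAdj (fun i => u (Fin.natAdd n₁ i)) (fun i => v (Fin.natAdd n₁ i)))
            then gray n₂ (fun i => v (Fin.natAdd n₁ i))
              - gray n₂ (fun i => u (Fin.natAdd n₁ i)) else 0) := by
        refine Finset.sum_congr rfl fun u _ => Finset.sum_congr rfl fun v _ => ?_
        by_cases h : cubeAdj u v
        · rw [if_pos h]
          rcases (cubeAdj_split u v).mp h with ⟨he, ht⟩ | ⟨hh, te⟩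
          · rw [if_pos ⟨he, ht⟩]
          · rw [te, Nat.sub_self]
            rw [if_neg]
            rintro ⟨he, -⟩
            unfold cubeAdj at hh
            rw [he, diffCount_eq_zero.mpr rfl] at hh
            omega
        · rw [if_neg h, if_neg (fun hcond => h ((cubeAdj_split u v).mpr (Or.inl hcond)))]
    _ = ∑ a : Fin n₁ → Bool, ∑ a' : Fin n₁ → Bool, ∑ b : Fin n₂ → Bool, ∑ b' : Fin n₂ → Bool,
          (if (a = a' ∧ cubeAdj b b') then gray n₂ b' - gray n₂ b else 0) := by
        rw [sum_append_split]
        refine Finset.sum_congr rfl fun a _ => ?_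
        rw [Finset.sum_congr rfl fun b (_ : b ∈ (Finset.univ : Finset (Fin n₂ → Bool))) =>
          sum_append_split _]
        rw [Finset.sum_comm]
        refine Finset.sum_congr rfl fun a' _ => Finset.sum_congr rfl fun b _ =>
          Finset.sum_congr rfl fun b' _ => ?_
        rw [head_append, head_append, tail_append, tail_append]
    _ = ∑ a : Fin n₁ → Bool, ∑ a' : Fin n₁ → Bool, (if a = a' then D n₂ else 0) := by
        refine Finset.sum_congr rfl fun a _ => Finset.sum_congr rfl fun a' _ => ?_
        by_cases h : a = a'
        · subst h
          simp only [if_pos rfl, true_and]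
          rfl
        · simp [h]
    _ = 2 ^ n₁ * D n₂ := by
        rw [Finset.sum_congr rfl fun a (_ : a ∈ (Finset.univ : Finset (Fin n₁ → Bool))) =>
          Finset.sum_ite_eq Finset.univ a (fun _ => D n₂)]
        simp [Finset.card_univ, mul_comm]
    _ = 2 ^ (n₁ + n₂ - n₂) * (2 ^ (2 * n₂ - 1) - 2 ^ (n₂ - 1)) := by
        rw [D_eq n₂ (by omega), Nat.add_sub_cancel]
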